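/- Fix a real γ ∈ (0,1) and reals K, W with 0 < W < K. Define T(L) := L(1−γ)/(1+Lγ), g := Kγ + 1, w := W/K, τ̄ := T(W)/(T(W)+T(K−W)), and let τ_t be any real with τ̄ ≤ τ_t ≤ 1. Define the piecewise function T(τ) by: T(τ) = T(W)/τ for 0 < τ < τ̄; T(τ) = min{T(K−W)+T(W), τ_t·T(K)/τ} for τ̄ ≤ τ ≤ τ_t; and T(τ) = T(K) for τ_t < τ ≤ 1. Then for every real G ≥ 2 and every τ ∈ (0,1] with τ ≥ (w/(1+w(g−1)))·(g/G), one has T(τ) ≤ G·T(K). -/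

import Mathlib

/-- Corollary 2: with `T(L) = L(1−γ)/(1+Lγ)`, `g = Kγ+1`, `w = W/K`,
`τ̄ = T(W)/(T(W)+T(K−W))`, a threshold `τ̄ ≤ τ_t ≤ 1`, and `Tf` the piecewise
achievable delay of Theorem 1, for every `G ≥ 2` and `τ ∈ (0,1]` with
`τ ≥ (w/(1+w(g−1)))·(g/G)` one has `Tf(τ) ≤ G·T(K)`. -/
theorem threshold_G (γ K W : ℝ) (hγ0 : 0 < γ) (hγ1 : γ < 1) (hW : 0 < W) (hWK : W < K)
    (T : ℝ → ℝ) (hT : ∀ L : ℝ, T L = L * (1 - γ) / (1 + L * γ))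
    (τb : ℝ) (hτb : τb = T W / (T W + T (K - W)))
    (τt : ℝ) (hτtl : τb ≤ τt) (hτtu : τt ≤ 1)
    (Tf : ℝ → ℝ)
    (hTf1 : ∀ τ : ℝ, 0 < τ → τ < τb → Tf τ = T W / τ)
    (hTf2 : ∀ τ : ℝ, τb ≤ τ → τ ≤ τt → Tf τ = min (T (K - W) + T W) (τt * T K / τ))
    (hTf3 : ∀ τ : ℝ, τt < τ → τ ≤ 1 → Tf τ = T K)
    (G : ℝ) (hG : 2 ≤ G) (τ : ℝ) (hτ0 : 0 < τ) (hτ1 : τ ≤ 1)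
    (hτG : (W / K) / (1 + (W / K) * ((K * γ + 1) - 1)) * ((K * γ + 1) / G) ≤ τ) :
    Tf τ ≤ G * T K := by
  have hK : 0 < K := hW.trans hWK
  have hγ' : 0 < 1 - γ := by linarith
  have hdW : 0 < 1 + W * γ := by positivity
  have hdK : 0 < 1 + K * γ := by positivity
  have hKW : 0 < K - W := by linarith
  have hdKW : 0 < 1 + (K - W) * γ := by positivity
  have hTK : 0 < T K := by rw [hT]; positivity
  have hG0 : 0 < G := by linarith
  have mono : ∀ a b : ℝ, 0 < a → a ≤ b → T a ≤ T b := by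
    intro a b ha hab
    rw [hT, hT]
    have hda : 0 < 1 + a * γ := by positivity
    have hdb : 0 < 1 + b * γ := by nlinarith
    rw [div_le_div_iff₀ hda hdb]
    nlinarith
  have h1 : (W / K) / (1 + (W / K) * ((K * γ + 1) - 1)) * ((K * γ + 1) / G)
      = T W / (G * T K) := by
    rw [hT, hT]
    have e : W / K * (K * γ + 1 - 1) = W * γ := by field_simp; ring
    rw [e]
    field_simp
    ring
  have key : T W ≤ τ * (G * T K) := by
    rw [h1, div_le_iff₀ (by positivity)] at hτG
    linarith
  rcases lt_or_ge τ τb with hc1 | hc1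
  · rw [hTf1 τ hτ0 hc1, div_le_iff₀ hτ0]
    linarith
  rcases le_or_gt τ τt with hc2 | hc2
  · rw [hTf2 τ hc1 hc2]
    have hm1 := mono W K hW hWK.le
    have hm2 := mono (K - W) K hKW (by linarith)
    have : T (K - W) + T W ≤ G * T K := by nlinarith
    exact le_trans (min_le_left _ _) this
  · rw [hTf3 τ hc2 hτ1]
    nlinarith
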